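/- arXiv:2211.15819 — 4 statements merged into one kernel-verified Lean document; each statement's English description precedes it below -/
import Mathlib

section
/- Every D-degenerate graph F with D ≥ 1 satisfies m₂(F) ≤ D, and if D ≥ 3 then the inequality is strict, i.e. m₂(F) < D. -/
open scoped Classical

/-- The 2-density `d₂` as a function of the number of vertices `v` and edges `e`:
`(e-1)/(v-2)` when `e ≥ 1` and `v ≥ 3`, and `1/2` otherwise (the conventions for `K₂`
and edgeless graphs). -/
noncomputable def d2val (v e : ℕ) : ℚ :=
  if 1 ≤ e ∧ 3 ≤ v then ((e : ℚ) - 1) / ((v : ℚ) - 2) else 1 / 2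

/-- `m₂(H) ≤ x`: every subgraph `H'` of `H`, with vertex set a finite set `s` containing all
endpoints of its edges, has 2-density at most `x`. -/
def m2LE {V : Type*} (H : SimpleGraph V) (x : ℚ) : Prop :=
  ∀ (s : Finset V) (H' : SimpleGraph V), H' ≤ H →
    (∀ ⦃a b⦄, H'.Adj a b → a ∈ s ∧ b ∈ s) →
    d2val s.card H'.edgeSet.ncard ≤ x

/-- `m₂(H) < x`: every subgraph of `H` has 2-density strictly less than `x`. -/
def m2LT {V : Type*} (H : SimpleGraph V) (x : ℚ) : Prop :=
  ∀ (s : Finset V) (H' : SimpleGraph V), H' ≤ H →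
    (∀ ⦃a b⦄, H'.Adj a b → a ∈ s ∧ b ∈ s) →
    d2val s.card H'.edgeSet.ncard < x

/-- `H` is `D`-degenerate: every nonempty (induced) subgraph has a vertex of degree at
most `D`. -/
def Degenerate {V : Type*} (D : ℕ) (H : SimpleGraph V) : Prop :=
  ∀ s : Finset V, s.Nonempty → ∃ a ∈ s, (H.neighborSet a ∩ ↑s).ncard ≤ D

/-- The maximal number of edges of a `D`-degenerate graph on `v` vertices. -/
def fbound (D : ℕ) : ℕ → ℕ
  | 0 => 0
  | n + 1 => fbound D n + min D n

lemma fbound_le (D : ℕ) (hD : 1 ≤ D) : ∀ v, 3 ≤ v → fbound D v + 2 * D ≤ D * v + 1 := by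
  intro v hv
  induction v, hv using Nat.le_induction with
  | base => simp only [fbound]; omega
  | succ n hn ih =>
      have : min D n ≤ D := min_le_left _ _
      have : D * (n + 1) = D * n + D := by ring
      simp only [fbound]; omega

lemma fbound_lt (D : ℕ) (hD : 3 ≤ D) : ∀ v, 3 ≤ v → fbound D v + 2 * D ≤ D * v := by
  intro v hv
  induction v, hv using Nat.le_induction with
  | base => simp only [fbound]; omega
  | succ n hn ih =>
      have : min D n ≤ D := min_le_left _ _
      have : D * (n + 1) = D * n + D := by ring
      simp only [fbound]; omega

lemma edge_bound {V : Type*} [Fintype V] (D : ℕ) (F : SimpleGraph V)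
    (hdeg : Degenerate D F) :
    ∀ (n : ℕ) (s : Finset V) (H' : SimpleGraph V), s.card = n → H' ≤ F →
      (∀ ⦃a b⦄, H'.Adj a b → a ∈ s ∧ b ∈ s) →
      H'.edgeSet.ncard ≤ fbound D n := by
  intro n
  induction n with
  | zero =>
      intro s H' hcard _ hsub
      have hs : s = ∅ := Finset.card_eq_zero.mp hcard
      have : H'.edgeSet = ∅ := by
        ext e
        induction e with
        | _ x y =>
            simp only [SimpleGraph.mem_edgeSet, Set.mem_empty_iff_false, iff_false]
            intro h
            have := (hsub h).1
            simp [hs] at this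
      simp [this, fbound]
  | succ n ih =>
      intro s H' hcard hle hsub
      have hne : s.Nonempty := Finset.card_pos.mp (by omega)
      obtain ⟨a, has, hdega⟩ := hdeg s hne
      set H'' := H'.deleteEdges (H'.incidenceSet a) with hH''
      have hle'' : H'' ≤ H' := SimpleGraph.deleteEdges_le _
      have hsub'' : ∀ ⦃x y⦄, H''.Adj x y → x ∈ s.erase a ∧ y ∈ s.erase a := by
        intro x y hxy
        obtain ⟨hadj, hni⟩ := SimpleGraph.deleteEdges_adj.mp hxy
        have hmem : ∀ z w, H'.Adj z w → (a = z ∨ a = w) →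
            s(z, w) ∈ H'.incidenceSet a := by
          intro z w hzw hor
          exact ⟨hzw, Sym2.mem_iff.mpr hor⟩
        have hx : x ≠ a := fun h => hni (hmem x y hadj (Or.inl h.symm))
        have hy : y ≠ a := fun h => hni (hmem x y hadj (Or.inr h.symm))
        exact ⟨Finset.mem_erase.mpr ⟨hx, (hsub hadj).1⟩,
               Finset.mem_erase.mpr ⟨hy, (hsub hadj).2⟩⟩
      have hcard' : (s.erase a).card = n := by
        rw [Finset.card_erase_of_mem has]; omega
      have hIH : H''.edgeSet.ncard ≤ fbound D n :=
        ih (s.erase a) H'' hcard' (hle''.trans hle) hsub''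
      -- count edges at a
      have hinc : (H'.incidenceSet a).ncard = (H'.neighborSet a).ncard := by
        rw [← Nat.card_coe_set_eq, ← Nat.card_coe_set_eq]
        exact Nat.card_congr (H'.incidenceSetEquivNeighborSet a)
      have hb1 : (H'.neighborSet a).ncard ≤ D := by
        refine le_trans (Set.ncard_le_ncard ?_ (Set.toFinite _)) hdega
        intro b hb
        exact ⟨hle hb, (hsub hb).2⟩
      have hb2 : (H'.neighborSet a).ncard ≤ n := by
        have hss : H'.neighborSet a ⊆ ↑(s.erase a) := by
          intro b hb
          have hadj : H'.Adj a b := hb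
          refine Finset.mem_coe.mpr (Finset.mem_erase.mpr ⟨?_, (hsub hadj).2⟩)
          rintro rfl
          exact H'.irrefl hadj
        calc (H'.neighborSet a).ncard ≤ (↑(s.erase a) : Set V).ncard :=
              Set.ncard_le_ncard hss (Set.toFinite _)
          _ = n := by rw [Set.ncard_coe_finset, hcard']
      have hsplit : (H'.edgeSet \ H'.incidenceSet a).ncard + (H'.incidenceSet a).ncard
          = H'.edgeSet.ncard :=
        Set.ncard_diff_add_ncard_of_subset (H'.incidenceSet_subset a) (Set.toFinite _)
      have heq : H''.edgeSet = H'.edgeSet \ H'.incidenceSet a :=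
        SimpleGraph.edgeSet_deleteEdges _
      have : H'.edgeSet.ncard ≤ fbound D n + min D n := by
        rw [← hsplit, heq.symm, hinc]
        have : (H'.neighborSet a).ncard ≤ min D n := le_min hb1 hb2
        omega
      simpa [fbound] using this

/-- A `D`-degenerate graph `F` with `D ≥ 1` satisfies `m₂(F) ≤ D`; if moreover `D ≥ 3`
then `m₂(F) < D`. -/
theorem m2_of_degenerate {V : Type*} [Fintype V] (D : ℕ) (hD : 1 ≤ D)
    (F : SimpleGraph V) (hdeg : Degenerate D F) :
    m2LE F D ∧ (3 ≤ D → m2LT F D) := by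
  constructor
  · intro s H' hle hsub
    have he := edge_bound D F hdeg s.card s H' rfl hle hsub
    unfold d2val
    split_ifs with h
    · obtain ⟨h1, h3⟩ := h
      have hf := fbound_le D hD s.card h3
      have hnat : H'.edgeSet.ncard + 2 * D ≤ D * s.card + 1 := by omega
      have hq : (H'.edgeSet.ncard : ℚ) + 2 * D ≤ D * s.card + 1 := by exact_mod_cast hnat
      have hv : (3 : ℚ) ≤ (s.card : ℚ) := by exact_mod_cast h3
      rw [div_le_iff₀ (by linarith)]
      linarith
    · have h1 : (1 : ℚ) ≤ (D : ℚ) := by exact_mod_cast hD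
      linarith
  · intro hD3 s H' hle hsub
    have he := edge_bound D F hdeg s.card s H' rfl hle hsub
    unfold d2val
    split_ifs with h
    · obtain ⟨h1, h3⟩ := h
      have hf := fbound_lt D hD3 s.card h3
      have hnat : H'.edgeSet.ncard + 2 * D ≤ D * s.card := by omega
      have hq : (H'.edgeSet.ncard : ℚ) + 2 * D ≤ D * s.card := by exact_mod_cast hnat
      have hv : (3 : ℚ) ≤ (s.card : ℚ) := by exact_mod_cast h3
      rw [div_lt_iff₀ (by linarith)]
      linarith
    · have h1 : (3 : ℚ) ≤ (D : ℚ) := by exact_mod_cast hD3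
      linarith
end

section
/- Let H be a connected graph with maximum degree at most 3 (i.e. D+1 with D=2) and H ≠ K₄. Then m₂(H) ≤ 2. -/
open scoped Classical

/-- A connected graph `H` with maximum degree at most `3` which is not (isomorphic to)
`K₄` satisfies `m₂(H) ≤ 2`. -/
theorem m2_maxdeg_three {V : Type*} [Fintype V] (H : SimpleGraph V)
    (hconn : H.Connected) (hdeg : ∀ v, (H.neighborSet v).ncard ≤ 3)
    (hK4 : ¬ Nonempty (H ≃g SimpleGraph.completeGraph (Fin 4))) :
    m2LE H 2 := by
  classical
  intro s H' hle hsub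
  set n := s.card with hn
  set m := H'.edgeSet.ncard with hm
  have hmcard : m = H'.edgeFinset.card := by
    rw [hm, SimpleGraph.edgeFinset, Set.ncard_eq_toFinset_card']
  have hHdeg : ∀ v, H.degree v ≤ 3 := by
    intro v
    have h := hdeg v
    rwa [Set.ncard_eq_toFinset_card', ← SimpleGraph.neighborFinset_def] at h
  have hsubN : ∀ v, H'.neighborFinset v ⊆ H.neighborFinset v := by
    intro v y hy
    rw [SimpleGraph.mem_neighborFinset] at *
    exact hle hy
  have hdeg3 : ∀ v, H'.degree v ≤ 3 := fun v =>
    le_trans (Finset.card_le_card (hsubN v)) (hHdeg v)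
  have hNsub : ∀ x, H'.neighborFinset x ⊆ s.erase x := by
    intro x y hy
    rw [SimpleGraph.mem_neighborFinset] at hy
    exact Finset.mem_erase.2 ⟨hy.ne', (hsub hy).2⟩
  have hzero : ∀ x ∉ s, H'.degree x = 0 := by
    intro x hx
    rw [SimpleGraph.degree, Finset.card_eq_zero]
    ext y
    simp only [SimpleGraph.mem_neighborFinset, Finset.notMem_empty, iff_false]
    exact fun hy => hx (hsub hy).1
  have hsum : ∑ x ∈ s, H'.degree x = 2 * m := by
    rw [hmcard, ← SimpleGraph.sum_degrees_eq_twice_card_edges]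
    exact Finset.sum_subset (Finset.subset_univ s) (fun x _ hx => hzero x hx)
  have h2m3n : 2 * m ≤ 3 * n := by
    rw [← hsum]
    calc ∑ x ∈ s, H'.degree x ≤ ∑ _x ∈ s, 3 :=
          Finset.sum_le_sum (fun x _ => hdeg3 x)
      _ = 3 * n := by rw [Finset.sum_const, smul_eq_mul, mul_comm]
  have h2mnn : 2 * m ≤ n * (n - 1) := by
    rw [← hsum]
    calc ∑ x ∈ s, H'.degree x ≤ ∑ x ∈ s, (s.erase x).card :=
          Finset.sum_le_sum (fun x _ => Finset.card_le_card (hNsub x))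
      _ ≤ ∑ _x ∈ s, (n - 1) := by
          refine Finset.sum_le_sum (fun x hx => ?_)
          rw [Finset.card_erase_of_mem hx]
      _ = n * (n - 1) := by rw [Finset.sum_const, smul_eq_mul]
  rw [d2val]
  split_ifs with h
  · obtain ⟨hm1, hn3⟩ := h
    have key : m + 3 ≤ 2 * n := by
      rcases lt_or_ge n 5 with h5 | h5
      · have hn34 : n = 3 ∨ n = 4 := by omega
        rcases hn34 with hn4 | hn4
        · rw [hn4] at h2mnn; omega
        · -- n = 4 : exclude m = 6 (K₄)
          by_contra hc
          have hm6 : m = 6 := by omega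
          -- every vertex of s has H'-degree exactly 3
          have hdegeq : ∀ x ∈ s, H'.degree x = 3 := by
            intro x hx
            by_contra hne
            have hlt : H'.degree x < 3 := lt_of_le_of_ne (hdeg3 x) hne
            have hslt : ∑ y ∈ s, H'.degree y < ∑ _y ∈ s, 3 :=
              Finset.sum_lt_sum (fun y _ => hdeg3 y) ⟨x, hx, hlt⟩
            rw [hsum, Finset.sum_const, smul_eq_mul, ← hn, hn4, hm6] at hslt
            omega
          have hNeq : ∀ x ∈ s, H'.neighborFinset x = s.erase x := by
            intro x hx
            refine Finset.eq_of_subset_of_card_le (hNsub x) ?_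
            rw [Finset.card_erase_of_mem hx, ← hn, hn4]
            have := hdegeq x hx
            rw [SimpleGraph.degree] at this
            omega
          have hNHeq : ∀ x ∈ s, H.neighborFinset x = s.erase x := by
            intro x hx
            have h1 : s.erase x ⊆ H.neighborFinset x := by
              rw [← hNeq x hx]; exact hsubN x
            refine (Finset.eq_of_subset_of_card_le h1 ?_).symm
            rw [Finset.card_erase_of_mem hx, ← hn, hn4]
            exact hHdeg x
          have hclosed : ∀ a b : V, H.Adj a b → a ∈ s → b ∈ s := by
            intro a b hab ha
            have hb : b ∈ H.neighborFinset a := by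
              rwa [SimpleGraph.mem_neighborFinset]
            rw [hNHeq a ha] at hb
            exact Finset.mem_of_mem_erase hb
          have hwalk : ∀ {a b : V} (_ : H.Walk a b), a ∈ s → b ∈ s := by
            intro a b p
            induction p with
            | nil => exact id
            | cons hadj _ ih => exact fun ha => ih (hclosed _ _ hadj ha)
          obtain ⟨x, hx⟩ : s.Nonempty := Finset.card_pos.1 (by rw [← hn, hn4]; norm_num)
          have huniv : ∀ b : V, b ∈ s := by
            intro b
            obtain ⟨p⟩ := hconn.preconnected x b
            exact hwalk p hx
          have hsuniv : s = Finset.univ := Finset.eq_univ_of_forall huniv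
          have hcardV : Fintype.card V = 4 := by
            rw [← Finset.card_univ, ← hsuniv, ← hn, hn4]
          have hcompl : ∀ a b : V, a ≠ b → H.Adj a b := by
            intro a b hab
            have hb : b ∈ H.neighborFinset a := by
              rw [hNHeq a (huniv a)]
              exact Finset.mem_erase.2 ⟨hab.symm, huniv b⟩
            rwa [SimpleGraph.mem_neighborFinset] at hb
          have e := Fintype.equivFinOfCardEq hcardV
          refine hK4 ⟨⟨e, ?_⟩⟩
          intro a b
          simp only [SimpleGraph.completeGraph, SimpleGraph.top_adj, ne_eq, EmbeddingLike.apply_eq_iff_eq]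
          constructor
          · intro hne; exact hcompl a b hne
          · intro hab; exact hab.ne
      · omega
    have hn2 : (0:ℚ) < (n:ℚ) - 2 := by
      have h3 : (3:ℚ) ≤ (n:ℚ) := by exact_mod_cast hn3
      linarith
    rw [div_le_iff₀ hn2]
    have hkey : (m:ℚ) + 3 ≤ 2 * (n:ℚ) := by exact_mod_cast key
    linarith
  · norm_num
end

section
/- Let D ≥ 3 and let H be a connected graph with maximum degree at most D+1. Then m₂(H) ≤ D. -/
open scoped Classical

lemma m2_arith (D v e : ℕ) (hD : 3 ≤ D) (hv : 3 ≤ v)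
    (h : 2 * e ≤ v * min (D + 1) (v - 1)) : e + 2 * D ≤ D * v + 1 := by
  have h2 : 2 * e ≤ v * (D + 1) :=
    h.trans (Nat.mul_le_mul_left v (min_le_left _ _))
  have h3 : 2 * e ≤ v * (v - 1) :=
    h.trans (Nat.mul_le_mul_left v (min_le_right _ _))
  rcases le_or_gt v 4 with hv4 | hv5
  · interval_cases v <;> omega
  · nlinarith [h2, hv5, hD]

/-- For `D ≥ 3`, a connected graph `H` with maximum degree at most `D+1` satisfies
`m₂(H) ≤ D`. -/
theorem m2_maxdeg_Dplusone {V : Type*} [Fintype V] (D : ℕ) (hD : 3 ≤ D)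
    (H : SimpleGraph V) (hconn : H.Connected)
    (hdeg : ∀ v, (H.neighborSet v).ncard ≤ D + 1) :
    m2LE H D := by
  classical
  intro s H' hle hsub
  unfold d2val
  split_ifs with h
  · obtain ⟨he, hv⟩ := h
    set e := H'.edgeSet.ncard with hedef
    -- edge count via edgeFinset
    have hecard : e = H'.edgeFinset.card := by
      rw [hedef, ← SimpleGraph.coe_edgeFinset, Set.ncard_coe_finset]
    -- degree zero outside s
    have hzero : ∀ a ∈ Finset.univ, a ∉ s → H'.degree a = 0 := by
      intro a _ ha
      rw [← SimpleGraph.card_neighborFinset_eq_degree]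
      apply Finset.card_eq_zero.mpr
      ext b
      simp only [SimpleGraph.mem_neighborFinset, Finset.notMem_empty, iff_false]
      intro hadj
      exact ha (hsub hadj).1
    -- degree bound inside s
    have hbnd : ∀ a ∈ s, H'.degree a ≤ min (D + 1) (s.card - 1) := by
      intro a _
      refine le_min ?_ ?_
      · have hsubn : H'.neighborFinset a ⊆ H.neighborFinset a := by
          intro b hb
          rw [SimpleGraph.mem_neighborFinset] at hb ⊢
          exact hle hb
        have := Finset.card_le_card hsubn
        rw [SimpleGraph.card_neighborFinset_eq_degree,
          SimpleGraph.card_neighborFinset_eq_degree] at this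
        refine this.trans ?_
        have := hdeg a
        rwa [Set.ncard_eq_toFinset_card', ← SimpleGraph.neighborFinset_def,
          SimpleGraph.card_neighborFinset_eq_degree] at this
      · have hsubn : H'.neighborFinset a ⊆ s.erase a := by
          intro b hb
          rw [SimpleGraph.mem_neighborFinset] at hb
          exact Finset.mem_erase.mpr ⟨(H'.ne_of_adj hb).symm, (hsub hb).2⟩
        have := Finset.card_le_card hsubn
        rwa [SimpleGraph.card_neighborFinset_eq_degree, Finset.card_erase_of_mem ‹a ∈ s›] at this
    -- degree sum
    have hsum : 2 * e = ∑ a ∈ s, H'.degree a := by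
      rw [hecard, ← SimpleGraph.sum_degrees_eq_twice_card_edges]
      exact (Finset.sum_subset (Finset.subset_univ s) hzero).symm
    have hkey : 2 * e ≤ s.card * min (D + 1) (s.card - 1) := by
      rw [hsum]
      calc ∑ a ∈ s, H'.degree a ≤ ∑ _a ∈ s, min (D + 1) (s.card - 1) :=
            Finset.sum_le_sum hbnd
        _ = s.card * min (D + 1) (s.card - 1) := by
            rw [Finset.sum_const, smul_eq_mul]
    have hmain : e + 2 * D ≤ D * s.card + 1 := m2_arith D s.card e hD hv hkey
    have hvpos : (0 : ℚ) < (s.card : ℚ) - 2 := by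
      have : (3 : ℚ) ≤ (s.card : ℚ) := by exact_mod_cast hv
      linarith
    rw [div_le_iff₀ hvpos]
    have hc : (e : ℚ) + 2 * D ≤ D * s.card + 1 := by exact_mod_cast hmain
    linarith
  · have : (3 : ℚ) ≤ (D : ℚ) := by exact_mod_cast hD
    linarith
end

section
/- Let H be a connected graph with maximum degree exactly D+1, D ≥ 2, let Q be an induced cycle in H on ℓ ≥ 3 vertices all of whose vertices have degree at most D+1 in H, and let H⁺ be obtained from H by duplicating Q (adding a disjoint copy Q' of Q, joining each copy y' of y ∈ V(Q) to N_H(y)∖V(Q)). Then m₂(H⁺) ≤ max(m₂(H), D). -/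
open scoped Classical

/-- The graph `H⁺` obtained from `H` by duplicating the (induced) subgraph on `Q`:
a disjoint copy `Q'` of `Q` is added, with each copy `y'` of `y ∈ Q` joined to
`N_H(y) ∖ Q`, and with the edges of `H` induced on `Q` repeated inside `Q'`. -/
def dup {V : Type*} (H : SimpleGraph V) (Q : Finset V) :
    SimpleGraph (V ⊕ {y : V // y ∈ Q}) :=
  SimpleGraph.fromRel (fun a b =>
    match a, b with
    | Sum.inl a, Sum.inl b => H.Adj a b
    | Sum.inl a, Sum.inr y => H.Adj a y.1 ∧ a ∉ Q
    | Sum.inr y, Sum.inr z => H.Adj y.1 z.1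
    | _, _ => False)

private lemma d2val_le_of {v e : ℕ} {M : ℚ} (hM : 2 ≤ M)
    (h : 1 ≤ e → 3 ≤ v → (e : ℚ) - 1 ≤ M * ((v : ℚ) - 2)) : d2val v e ≤ M := by
  unfold d2val
  split_ifs with hc
  · have hv : (3:ℚ) ≤ (v:ℚ) := by exact_mod_cast hc.2
    rw [div_le_iff₀ (by linarith)]
    exact h hc.1 hc.2
  · linarith

private def pb {W U : Type*} (f : W → U) (G : SimpleGraph U) : SimpleGraph W where
  Adj a b := G.Adj (f a) (f b)
  symm := ⟨fun _ _ h => h.symm⟩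
  loopless := ⟨fun a h => G.loopless.irrefl (f a) h⟩

private lemma pb_adj {W U : Type*} (f : W → U) (G : SimpleGraph U) (a b : W) :
    (pb f G).Adj a b ↔ G.Adj (f a) (f b) := Iff.rfl

private lemma edgeSet_ncard_eq {U : Type*} [Fintype U] (G : SimpleGraph U) :
    G.edgeSet.ncard = G.edgeFinset.card := by
  rw [← SimpleGraph.coe_edgeFinset, Set.ncard_coe_finset]

private lemma card_pb {W U : Type*} [Fintype W] [Fintype U]
    (G : SimpleGraph U) (f : W → U) (hf : Function.Injective f)
    (p : Sym2 U → Prop) [DecidablePred p]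
    (hp : ∀ e, p e ↔ ∀ v ∈ e, ∃ w, f w = v) :
    (pb f G).edgeFinset.card = (G.edgeFinset.filter p).card := by
  apply Finset.card_bij (fun e (_ : e ∈ (pb f G).edgeFinset) => Sym2.map f e)
  · intro e he
    induction e using Sym2.ind with
    | _ u w =>
      rw [SimpleGraph.mem_edgeFinset, SimpleGraph.mem_edgeSet] at he
      rw [Sym2.map_pair_eq, Finset.mem_filter, SimpleGraph.mem_edgeFinset,
        SimpleGraph.mem_edgeSet, hp]
      refine ⟨he, ?_⟩
      intro v hv
      rcases Sym2.mem_iff.1 hv with rfl | rfl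
      exacts [⟨u, rfl⟩, ⟨w, rfl⟩]
  · intro e₁ _ e₂ _ h
    exact Sym2.map.injective hf h
  · intro e he
    rw [Finset.mem_filter, SimpleGraph.mem_edgeFinset, hp] at he
    obtain ⟨heE, hrange⟩ := he
    induction e using Sym2.ind with
    | _ u w =>
      obtain ⟨a, rfl⟩ := hrange u (Sym2.mem_iff.2 (Or.inl rfl))
      obtain ⟨b, rfl⟩ := hrange w (Sym2.mem_iff.2 (Or.inr rfl))
      refine ⟨s(a, b), ?_, by rw [Sym2.map_pair_eq]⟩
      rw [SimpleGraph.mem_edgeSet] at heE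
      rw [SimpleGraph.mem_edgeFinset, SimpleGraph.mem_edgeSet]
      exact heE

/-- Duplicating an induced cycle `Q` (on `ℓ ≥ 3` vertices, all of degree at most `D+1`)
in a connected graph `H` of maximum degree exactly `D+1` (`D ≥ 2`) gives
`m₂(H⁺) ≤ max(m₂(H), D)`. -/
theorem m2_dup_cycle {V : Type*} [Fintype V] (D ℓ : ℕ) (hD : 2 ≤ D) (hℓ : 3 ≤ ℓ)
    (H : SimpleGraph V) (hconn : H.Connected)
    (hdeg : ∀ v, (H.neighborSet v).ncard ≤ D + 1)
    (hdegmax : ∃ v, (H.neighborSet v).ncard = D + 1)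
    (Q : Finset V) (hQcard : Q.card = ℓ)
    (hQdeg : ∀ y ∈ Q, (H.neighborSet y).ncard ≤ D + 1)
    (hQconn : (H.induce (↑Q : Set V)).Connected)
    (hQcycle : ∀ y ∈ Q, (H.neighborSet y ∩ ↑Q).ncard = 2)
    (x : ℚ) (hx : m2LE H x) :
    m2LE (dup H Q) (max x (D : ℚ)) := by
  classical
  intro s H' hle hsupp
  set M : ℚ := max x (D : ℚ) with hMdef
  have hMx : x ≤ M := le_max_left _ _
  have hMD : (D:ℚ) ≤ M := le_max_right _ _
  have hM2 : (2:ℚ) ≤ M := le_trans (by exact_mod_cast hD) hMD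
  -- structural adjacency facts
  have hAdj_ll : ∀ {a b : V}, H'.Adj (Sum.inl a) (Sum.inl b) → H.Adj a b := by
    intro a b h
    obtain ⟨-, h' | h'⟩ := (hle h : Sum.inl a ≠ Sum.inl b ∧ (H.Adj a b ∨ H.Adj b a))
    exacts [h', h'.symm]
  have hAdj_lr : ∀ {a : V} {y : {y : V // y ∈ Q}},
      H'.Adj (Sum.inl a) (Sum.inr y) → H.Adj a y.1 ∧ a ∉ Q := by
    intro a y h
    obtain ⟨-, h' | h'⟩ :=
      (hle h : Sum.inl a ≠ Sum.inr y ∧ ((H.Adj a y.1 ∧ a ∉ Q) ∨ False))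
    exacts [h', h'.elim]
  have hAdj_rr : ∀ {y z : {y : V // y ∈ Q}},
      H'.Adj (Sum.inr y) (Sum.inr z) → H.Adj y.1 z.1 := by
    intro y z h
    obtain ⟨-, h' | h'⟩ :=
      (hle h : Sum.inr y ≠ Sum.inr z ∧ (H.Adj y.1 z.1 ∨ H.Adj z.1 y.1))
    exacts [h', h'.symm]
  -- vertex counts
  set s₁ := s.toLeft with hs₁def
  set s₂ := s.toRight with hs₂def
  have hcard : s.card = s₁.card + s₂.card := (Finset.card_toLeft_add_card_toRight (u := s)).symm
  -- neighbour counting facts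
  have hncard : ∀ v : V, (H.neighborSet v).ncard = (H.neighborFinset v).card := by
    intro v
    rw [← Set.ncard_coe_finset, SimpleGraph.neighborFinset_def, Set.coe_toFinset]
  have hQ2 : ∀ y : {y : V // y ∈ Q}, (H.neighborFinset y.1 ∩ Q).card = 2 := by
    intro y
    rw [← Set.ncard_coe_finset, Finset.coe_inter, SimpleGraph.neighborFinset_def,
      Set.coe_toFinset]
    exact hQcycle y.1 y.2
  -- rewrite the goal in terms of edgeFinset
  have hEne : H'.edgeSet.ncard = H'.edgeFinset.card := edgeSet_ncard_eq H'
  rw [hEne]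
  -- edge classification
  have hRnotL : ∀ e ∈ H'.edgeFinset, (∀ v ∈ e, ∃ w, Sum.inr w = v) → ¬ (∀ v ∈ e, ∃ w, Sum.inl w = v) := by
    intro e heE hR hL
    induction e using Sym2.ind with
    | _ u w =>
      obtain ⟨y, hy⟩ := hR u (Sym2.mem_iff.2 (Or.inl rfl))
      obtain ⟨b, hb⟩ := hL u (Sym2.mem_iff.2 (Or.inl rfl))
      rw [← hb] at hy
      exact absurd hy (by simp)
  have hsplit : H'.edgeFinset.card = (H'.edgeFinset.filter (fun e => ∀ v ∈ e, ∃ w, Sum.inl w = v)).card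
      + (H'.edgeFinset.filter (fun e => ∀ v ∈ e, ∃ w, Sum.inr w = v)).card
      + (H'.edgeFinset.filter (fun e => ¬ (∀ v ∈ e, ∃ w, Sum.inl w = v) ∧ ¬ (∀ v ∈ e, ∃ w, Sum.inr w = v))).card := by
    have h1 := Finset.card_filter_add_card_filter_not
      (s := H'.edgeFinset) (p := (fun e => ∀ v ∈ e, ∃ w, Sum.inl w = v))
    have h2 := Finset.card_filter_add_card_filter_not
      (s := H'.edgeFinset.filter (fun e => ¬ (∀ v ∈ e, ∃ w, Sum.inl w = v))) (p := (fun e => ∀ v ∈ e, ∃ w, Sum.inr w = v))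
    have h3 : (H'.edgeFinset.filter (fun e => ¬ (∀ v ∈ e, ∃ w, Sum.inl w = v))).filter (fun e => ∀ v ∈ e, ∃ w, Sum.inr w = v)
        = H'.edgeFinset.filter (fun e => ∀ v ∈ e, ∃ w, Sum.inr w = v) := by
      rw [Finset.filter_filter]
      apply Finset.filter_congr
      intro e heE
      exact and_iff_right_of_imp (fun hR => hRnotL e heE hR)
    have h4 : (H'.edgeFinset.filter (fun e => ¬ (∀ v ∈ e, ∃ w, Sum.inl w = v))).filter (fun e => ¬ (∀ v ∈ e, ∃ w, Sum.inr w = v))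
        = H'.edgeFinset.filter (fun e => ¬ (∀ v ∈ e, ∃ w, Sum.inl w = v) ∧ ¬ (∀ v ∈ e, ∃ w, Sum.inr w = v)) := Finset.filter_filter _ _ _
    rw [h3, h4] at h2
    omega
  -- the left part as a graph on V
  have hA_card : (pb Sum.inl H').edgeFinset.card = (H'.edgeFinset.filter (fun e => ∀ v ∈ e, ∃ w, Sum.inl w = v)).card :=
    card_pb H' Sum.inl Sum.inl_injective _ (fun e => Iff.rfl)
  have hAle : pb Sum.inl H' ≤ H := fun a b h => hAdj_ll h
  have hAsupp : ∀ ⦃a b⦄, (pb Sum.inl H').Adj a b → a ∈ s₁ ∧ b ∈ s₁ := by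
    intro a b h
    exact ⟨Finset.mem_toLeft.2 (hsupp h).1, Finset.mem_toLeft.2 (hsupp h).2⟩
  have hxA := hx s₁ (pb Sum.inl H') hAle hAsupp
  rw [edgeSet_ncard_eq, hA_card] at hxA
  have hAchoose : (H'.edgeFinset.filter (fun e => ∀ v ∈ e, ∃ w, Sum.inl w = v)).card ≤ s₁.card.choose 2 := by
    rw [← hA_card]
    refine le_trans (Finset.card_le_card ?_) (le_of_eq (Sym2.card_image_offDiag s₁))
    intro e he
    induction e using Sym2.ind with
    | _ u w =>
      rw [SimpleGraph.mem_edgeFinset, SimpleGraph.mem_edgeSet] at he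
      exact Finset.mem_image.2 ⟨(u, w),
        Finset.mem_offDiag.2 ⟨(hAsupp he).1, (hAsupp he).2, he.ne⟩, rfl⟩
  -- the copied-cycle part
  have hC_card : (pb Sum.inr H').edgeFinset.card = (H'.edgeFinset.filter (fun e => ∀ v ∈ e, ∃ w, Sum.inr w = v)).card :=
    card_pb H' Sum.inr Sum.inr_injective _ (fun e => Iff.rfl)
  have hCle : (H'.edgeFinset.filter (fun e => ∀ v ∈ e, ∃ w, Sum.inr w = v)).card ≤ s₂.card := by
    rw [← hC_card]
    have hdeg2 : ∀ y : {y : V // y ∈ Q}, (pb Sum.inr H').degree y ≤ 2 := by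
      intro y
      calc (pb Sum.inr H').degree y = ((pb Sum.inr H').neighborFinset y).card := rfl
        _ ≤ (H.neighborFinset y.1 ∩ Q).card := by
            apply Finset.card_le_card_of_injOn Subtype.val
            · intro z hz
              rw [Finset.mem_coe, SimpleGraph.mem_neighborFinset] at hz
              have hz' := hAdj_rr hz
              exact Finset.mem_inter.2 ⟨by rw [SimpleGraph.mem_neighborFinset]; exact hz', z.2⟩
            · intro a _ b _ hab; exact Subtype.ext hab
        _ = 2 := hQ2 y
    have hdeg0 : ∀ y, y ∉ s₂ → (pb Sum.inr H').degree y = 0 := by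
      intro y hy
      by_contra h0
      obtain ⟨z, hz⟩ := ((pb Sum.inr H').degree_pos_iff_exists_adj y).1
        (Nat.pos_of_ne_zero h0)
      exact hy (Finset.mem_toRight.2 (hsupp hz).1)
    have hhs := SimpleGraph.sum_degrees_eq_twice_card_edges (pb Sum.inr H')
    have hsum : ∑ y, (pb Sum.inr H').degree y ≤ 2 * s₂.card := by
      rw [← Finset.sum_subset (Finset.subset_univ s₂) (fun y _ hy => hdeg0 y hy)]
      calc ∑ y ∈ s₂, (pb Sum.inr H').degree y ≤ ∑ _y ∈ s₂, 2 :=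
            Finset.sum_le_sum (fun y _ => hdeg2 y)
        _ = 2 * s₂.card := by rw [Finset.sum_const, smul_eq_mul, mul_comm]
    rw [hhs] at hsum
    omega
  -- shape of mixed edges
  have hBshape : ∀ e ∈ H'.edgeFinset.filter (fun e => ¬ (∀ v ∈ e, ∃ w, Sum.inl w = v) ∧ ¬ (∀ v ∈ e, ∃ w, Sum.inr w = v)),
      ∃ (a : V) (y : {y : V // y ∈ Q}), e = s(Sum.inl a, Sum.inr y)
        ∧ H.Adj a y.1 ∧ a ∉ Q ∧ Sum.inl a ∈ s ∧ y ∈ s₂ := by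
    intro e he
    rw [Finset.mem_filter] at he
    obtain ⟨heE, hnL, hnR⟩ := he
    induction e using Sym2.ind with
    | _ u w =>
      rw [SimpleGraph.mem_edgeFinset, SimpleGraph.mem_edgeSet] at heE
      match u, w, heE, hnL, hnR with
      | Sum.inl a, Sum.inl b, heE, hnL, hnR =>
        exact absurd (fun v hv => by
          rcases Sym2.mem_iff.1 hv with rfl | rfl
          exacts [⟨a, rfl⟩, ⟨b, rfl⟩]) hnL
      | Sum.inl a, Sum.inr z, heE, hnL, hnR =>
        exact ⟨a, z, rfl, (hAdj_lr heE).1, (hAdj_lr heE).2, (hsupp heE).1,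
          Finset.mem_toRight.2 (hsupp heE).2⟩
      | Sum.inr y, Sum.inl b, heE, hnL, hnR =>
        exact ⟨b, y, Sym2.eq_swap, (hAdj_lr heE.symm).1, (hAdj_lr heE.symm).2,
          (hsupp heE).2, Finset.mem_toRight.2 (hsupp heE).1⟩
      | Sum.inr y, Sum.inr z, heE, hnL, hnR =>
        exact absurd (fun v hv => by
          rcases Sym2.mem_iff.1 hv with rfl | rfl
          exacts [⟨y, rfl⟩, ⟨z, rfl⟩]) hnR
  -- bound on mixed edges
  have hBle : (H'.edgeFinset.filter (fun e => ¬ (∀ v ∈ e, ∃ w, Sum.inl w = v) ∧ ¬ (∀ v ∈ e, ∃ w, Sum.inr w = v))).card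
      ≤ (D - 1) * s₂.card := by
    have hsub : H'.edgeFinset.filter (fun e => ¬ (∀ v ∈ e, ∃ w, Sum.inl w = v) ∧ ¬ (∀ v ∈ e, ∃ w, Sum.inr w = v)) ⊆
        s₂.biUnion (fun y => (H'.edgeFinset.filter (fun e => ¬ (∀ v ∈ e, ∃ w, Sum.inl w = v) ∧ ¬ (∀ v ∈ e, ∃ w, Sum.inr w = v))).filter
          (fun e => Sum.inr y ∈ e)) := by
      intro e he
      obtain ⟨a, y, rfl, -, -, -, hy⟩ := hBshape e he
      exact Finset.mem_biUnion.2 ⟨y, hy,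
        Finset.mem_filter.2 ⟨he, Sym2.mem_iff.2 (Or.inr rfl)⟩⟩
    have hfib : ∀ y ∈ s₂,
        ((H'.edgeFinset.filter (fun e => ¬ (∀ v ∈ e, ∃ w, Sum.inl w = v) ∧ ¬ (∀ v ∈ e, ∃ w, Sum.inr w = v))).filter
          (fun e => Sum.inr y ∈ e)).card ≤ D - 1 := by
      intro y _
      have hsub2 : (H'.edgeFinset.filter (fun e => ¬ (∀ v ∈ e, ∃ w, Sum.inl w = v) ∧ ¬ (∀ v ∈ e, ∃ w, Sum.inr w = v))).filter
          (fun e => Sum.inr y ∈ e) ⊆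
          (H.neighborFinset y.1 \ Q).image (fun a => s(Sum.inl a, Sum.inr y)) := by
        intro e he
        rw [Finset.mem_filter] at he
        obtain ⟨a, z, rfl, hadj, haQ, -, -⟩ := hBshape e he.1
        have hz : z = y := by
          rcases Sym2.mem_iff.1 he.2 with h | h
          · exact absurd h (by simp)
          · exact (Sum.inr_injective h).symm
        subst hz
        refine Finset.mem_image.2 ⟨a, ?_, rfl⟩
        rw [Finset.mem_sdiff, SimpleGraph.mem_neighborFinset]
        exact ⟨hadj.symm, haQ⟩
      refine le_trans (Finset.card_le_card hsub2) (le_trans Finset.card_image_le ?_)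
      have h2 : (H.neighborFinset y.1).card ≤ D + 1 := by
        have := hdeg y.1
        rwa [hncard y.1] at this
      have h3 := Finset.card_sdiff_add_card_inter (H.neighborFinset y.1) Q
      have h4 := hQ2 y
      omega
    calc (H'.edgeFinset.filter (fun e => ¬ (∀ v ∈ e, ∃ w, Sum.inl w = v) ∧ ¬ (∀ v ∈ e, ∃ w, Sum.inr w = v))).card
        ≤ _ := Finset.card_le_card hsub
      _ ≤ ∑ y ∈ s₂, ((H'.edgeFinset.filter (fun e => ¬ (∀ v ∈ e, ∃ w, Sum.inl w = v) ∧ ¬ (∀ v ∈ e, ∃ w, Sum.inr w = v))).filter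
            (fun e => Sum.inr y ∈ e)).card := Finset.card_biUnion_le
      _ ≤ ∑ _y ∈ s₂, (D - 1) := Finset.sum_le_sum hfib
      _ = (D - 1) * s₂.card := by rw [Finset.sum_const, smul_eq_mul, mul_comm]
  -- main case distinction
  by_cases hno : ∀ b : V, Sum.inl b ∈ s → b ∉ Q
  · -- the whole subgraph embeds into H
    set g : V → V ⊕ {y : V // y ∈ Q} :=
      fun v => if h : v ∈ Q then Sum.inr ⟨v, h⟩ else Sum.inl v with hgdef
    have hgQ : ∀ (v) (h : v ∈ Q), g v = Sum.inr ⟨v, h⟩ := fun v h => dif_pos h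
    have hgnQ : ∀ v, v ∉ Q → g v = Sum.inl v := fun v h => dif_neg h
    have hginj : Function.Injective g := by
      intro u v huv
      by_cases hu : u ∈ Q <;> by_cases hv : v ∈ Q
      · rw [hgQ u hu, hgQ v hv] at huv
        exact congrArg Subtype.val (Sum.inr_injective huv)
      · rw [hgQ u hu, hgnQ v hv] at huv; exact absurd huv (by simp)
      · rw [hgnQ u hu, hgQ v hv] at huv; exact absurd huv (by simp)
      · rw [hgnQ u hu, hgnQ v hv] at huv; exact Sum.inl_injective huv
    have hrange : ∀ u ∈ s, ∃ w, g w = u := by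
      rintro (b | y) hu
      · exact ⟨b, hgnQ b (hno b hu)⟩
      · exact ⟨y.1, (hgQ y.1 y.2).trans rfl⟩
    have hH2le : pb g H' ≤ H := by
      intro u v h
      rw [pb_adj] at h
      by_cases hu : u ∈ Q <;> by_cases hv : v ∈ Q
      · rw [hgQ u hu, hgQ v hv] at h; exact hAdj_rr h
      · rw [hgQ u hu, hgnQ v hv] at h; exact ((hAdj_lr h.symm).1).symm
      · rw [hgnQ u hu, hgQ v hv] at h; exact (hAdj_lr h).1
      · rw [hgnQ u hu, hgnQ v hv] at h; exact hAdj_ll h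
    set t : Finset V := Finset.univ.filter (fun v => g v ∈ s) with htdef
    have hsupp2 : ∀ ⦃a b⦄, (pb g H').Adj a b → a ∈ t ∧ b ∈ t := by
      intro a b h
      exact ⟨Finset.mem_filter.2 ⟨Finset.mem_univ _, (hsupp h).1⟩,
        Finset.mem_filter.2 ⟨Finset.mem_univ _, (hsupp h).2⟩⟩
    have htcard : t.card = s.card := by
      apply Finset.card_bij (fun v (_ : v ∈ t) => g v)
      · intro v hv; exact (Finset.mem_filter.1 hv).2
      · intro a _ b _ h; exact hginj h
      · intro u hu
        obtain ⟨w, hw⟩ := hrange u hu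
        exact ⟨w, Finset.mem_filter.2 ⟨Finset.mem_univ _, by rw [hw]; exact hu⟩, hw⟩
    have hecard : (pb g H').edgeFinset.card = H'.edgeFinset.card := by
      rw [card_pb H' g hginj (fun e => ∀ v ∈ e, ∃ w, g w = v) (fun e => Iff.rfl)]
      congr 1
      apply Finset.filter_true_of_mem
      intro e he
      induction e using Sym2.ind with
      | _ u w =>
        rw [SimpleGraph.mem_edgeFinset, SimpleGraph.mem_edgeSet] at he
        intro v hv
        rcases Sym2.mem_iff.1 hv with rfl | rfl
        · exact hrange _ (hsupp he).1
        · exact hrange _ (hsupp he).2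
    have hfin := hx t (pb g H') hH2le hsupp2
    rw [edgeSet_ncard_eq, hecard, htcard] at hfin
    exact le_trans hfin hMx
  · push_neg at hno
    obtain ⟨b₀, hb₀s, hb₀Q⟩ := hno
    have hb₀ : b₀ ∈ s₁ := Finset.mem_toLeft.2 hb₀s
    have hn1 : 1 ≤ s₁.card := Finset.card_pos.2 ⟨b₀, hb₀⟩
    by_cases hn : s₁.card = 1
    · -- a single left vertex, and it lies in Q : no left-left and no mixed edges
      have hs₁eq : s₁ = {b₀} := by
        obtain ⟨c, hc⟩ := Finset.card_eq_one.1 hn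
        rw [hc] at hb₀ ⊢
        rw [Finset.mem_singleton] at hb₀
        rw [hb₀]
      have hE₁ : H'.edgeFinset.filter (fun e => ∀ v ∈ e, ∃ w, Sum.inl w = v) = ∅ := by
        rw [Finset.eq_empty_iff_forall_notMem]
        intro e he
        rw [Finset.mem_filter] at he
        obtain ⟨heE, hL⟩ := he
        induction e using Sym2.ind with
        | _ u w =>
          rw [SimpleGraph.mem_edgeFinset, SimpleGraph.mem_edgeSet] at heE
          obtain ⟨a, rfl⟩ := hL u (Sym2.mem_iff.2 (Or.inl rfl))
          obtain ⟨c, rfl⟩ := hL w (Sym2.mem_iff.2 (Or.inr rfl))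
          have h1 : a ∈ s₁ := Finset.mem_toLeft.2 (hsupp heE).1
          have h2 : c ∈ s₁ := Finset.mem_toLeft.2 (hsupp heE).2
          rw [hs₁eq, Finset.mem_singleton] at h1 h2
          subst h1; subst h2
          exact H'.loopless.irrefl _ heE
      have hEb : H'.edgeFinset.filter (fun e => ¬ (∀ v ∈ e, ∃ w, Sum.inl w = v) ∧ ¬ (∀ v ∈ e, ∃ w, Sum.inr w = v)) = ∅ := by
        rw [Finset.eq_empty_iff_forall_notMem]
        intro e he
        obtain ⟨a, y, -, -, haQ, has, -⟩ := hBshape e he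
        have h1 : a ∈ s₁ := Finset.mem_toLeft.2 has
        rw [hs₁eq, Finset.mem_singleton] at h1
        subst h1
        exact haQ hb₀Q
      have hEcount : H'.edgeFinset.card = (H'.edgeFinset.filter (fun e => ∀ v ∈ e, ∃ w, Sum.inr w = v)).card := by
        rw [hsplit, hE₁, hEb]; simp
      apply d2val_le_of hM2
      intro he hv
      have hk2 : 2 ≤ s₂.card := by omega
      have hele : H'.edgeFinset.card ≤ s₂.card := by rw [hEcount]; exact hCle
      have h1 : (H'.edgeFinset.card : ℚ) ≤ (s₂.card : ℚ) := by exact_mod_cast hele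
      have h2 : (s.card : ℚ) = 1 + (s₂.card : ℚ) := by
        rw [hcard, hn]; push_cast; ring
      have h3 : (2:ℚ) ≤ (s₂.card : ℚ) := by exact_mod_cast hk2
      nlinarith
    · -- at least two left vertices
      have hn2 : 2 ≤ s₁.card := by omega
      apply d2val_le_of hM2
      intro _ _
      have hkey : ((H'.edgeFinset.filter (fun e => ∀ v ∈ e, ∃ w, Sum.inl w = v)).card : ℚ) - 1 ≤ M * ((s₁.card : ℚ) - 2) := by
        by_cases hn3 : 3 ≤ s₁.card
        · have hq3 : (3:ℚ) ≤ (s₁.card : ℚ) := by exact_mod_cast hn3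
          by_cases he1 : 1 ≤ (H'.edgeFinset.filter (fun e => ∀ v ∈ e, ∃ w, Sum.inl w = v)).card
          · unfold d2val at hxA
            rw [if_pos ⟨he1, hn3⟩] at hxA
            have hpos : (0:ℚ) < (s₁.card:ℚ) - 2 := by linarith
            rw [div_le_iff₀ hpos] at hxA
            calc ((H'.edgeFinset.filter (fun e => ∀ v ∈ e, ∃ w, Sum.inl w = v)).card : ℚ) - 1
                ≤ x * ((s₁.card:ℚ) - 2) := hxA
              _ ≤ M * ((s₁.card:ℚ) - 2) :=
                  mul_le_mul_of_nonneg_right hMx (le_of_lt hpos)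
          · have h0 : (H'.edgeFinset.filter (fun e => ∀ v ∈ e, ∃ w, Sum.inl w = v)).card = 0 := by omega
            rw [h0]
            have : (0:ℚ) ≤ M * ((s₁.card:ℚ) - 2) :=
              mul_nonneg (by linarith) (by linarith)
            simp only [Nat.cast_zero]
            linarith
        · have hn2' : s₁.card = 2 := by omega
          have hle1 : (H'.edgeFinset.filter (fun e => ∀ v ∈ e, ∃ w, Sum.inl w = v)).card ≤ 1 := by
            have := hAchoose
            rw [hn2'] at this
            simpa using this
          have hle1' : ((H'.edgeFinset.filter (fun e => ∀ v ∈ e, ∃ w, Sum.inl w = v)).card : ℚ) ≤ 1 := by exact_mod_cast hle1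
          have hz : ((s₁.card : ℚ) - 2) = 0 := by rw [hn2']; norm_num
          rw [hz, mul_zero]
          linarith
      have hc2 : ((H'.edgeFinset.filter (fun e => ∀ v ∈ e, ∃ w, Sum.inr w = v)).card : ℚ) ≤ (s₂.card : ℚ) := by
        exact_mod_cast hCle
      have hb2 : ((H'.edgeFinset.filter (fun e => ¬ (∀ v ∈ e, ∃ w, Sum.inl w = v) ∧ ¬ (∀ v ∈ e, ∃ w, Sum.inr w = v))).card : ℚ)
          ≤ ((D:ℚ) - 1) * (s₂.card : ℚ) := by
        have h1 : ((H'.edgeFinset.filter (fun e => ¬ (∀ v ∈ e, ∃ w, Sum.inl w = v) ∧ ¬ (∀ v ∈ e, ∃ w, Sum.inr w = v))).card : ℚ)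
            ≤ ((D - 1 : ℕ) : ℚ) * (s₂.card : ℚ) := by exact_mod_cast hBle
        have h2 : ((D - 1 : ℕ) : ℚ) = (D:ℚ) - 1 := by
          push_cast [Nat.cast_sub (by omega : 1 ≤ D)]; ring
        rwa [h2] at h1
      have hEq : (H'.edgeFinset.card : ℚ) = ((H'.edgeFinset.filter (fun e => ∀ v ∈ e, ∃ w, Sum.inl w = v)).card : ℚ)
          + ((H'.edgeFinset.filter (fun e => ∀ v ∈ e, ∃ w, Sum.inr w = v)).card : ℚ)
          + ((H'.edgeFinset.filter (fun e => ¬ (∀ v ∈ e, ∃ w, Sum.inl w = v) ∧ ¬ (∀ v ∈ e, ∃ w, Sum.inr w = v))).card : ℚ) := by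
        exact_mod_cast hsplit
      have hscard : (s.card : ℚ) = (s₁.card : ℚ) + (s₂.card : ℚ) := by
        exact_mod_cast hcard
      have hk0 : (0:ℚ) ≤ (s₂.card : ℚ) := Nat.cast_nonneg _
      have hDM : (D:ℚ) * (s₂.card : ℚ) ≤ M * (s₂.card : ℚ) :=
        mul_le_mul_of_nonneg_right hMD hk0
      have hMs : M * ((s.card:ℚ) - 2) = M * ((s₁.card:ℚ) - 2) + M * (s₂.card:ℚ) := by
        rw [hscard]; ring
      have hDk : ((D:ℚ) - 1) * (s₂.card:ℚ) + (s₂.card:ℚ) = (D:ℚ) * (s₂.card:ℚ) := by ring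
      linarith [hkey, hc2, hb2, hDM, hEq, hMs, hDk]
end
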